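/- Hadamard-type bound for a block Cauchy determinant: Let ξ^{(1)}_1,...,ξ^{(1)}_{k_1}, η^{(1)}_1,...,η^{(1)}_{k_1}, ξ^{(2)}_1,...,ξ^{(2)}_{k_2}, η^{(2)}_1,...,η^{(2)}_{k_2} be complex numbers lying on fixed disjoint contours, with δ > 0 a lower bound for the distance from any one of these points to all other contours (other than the one it lies on). Then |B| ≤ k_1^{k_1/2} k_2^{k_2/2} (k_1+k_2)^{(k_1+k_2)/2} · δ^{−2(k_1+k_2)}, where B := ∏_{ℓ=1}^2 [ (Δ(ξ^{(ℓ)}))^2 (Δ(η^{(ℓ)}))^2 / (Δ(ξ^{(ℓ)}; η^{(ℓ)}))^2 ] · Δ(ξ^{(1)}; η^{(2)}) Δ(η^{(1)}; ξ^{(2)}) / ( Δ(ξ^{(1)}; ξ^{(2)}) Δ(η^{(1)}; η^{(2)}) ). -/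

import Mathlib

open Finset

/-- `Δ(W) = ∏_{i<j} (w_j − w_i)`. -/
noncomputable def Vand {k : ℕ} (W : Fin k → ℂ) : ℂ :=
  ∏ j, ∏ i ∈ Finset.Iio j, (W j - W i)

/-- `Δ(W;W') = ∏_{i,i'} (w_i − w'_{i'})`. -/
noncomputable def VandP {k k' : ℕ} (W : Fin k → ℂ) (W' : Fin k' → ℂ) : ℂ :=
  ∏ i, ∏ i', (W i - W' i')

local notation "⟪" x ", " y "⟫" => @inner ℂ _ _ x y

noncomputable def Complex.abs : AbsoluteValue ℂ ℝ := IsAbsoluteValue.toAbsoluteValue (‖·‖ : ℂ → ℝ)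

lemma Complex.abs_apply (z : ℂ) : Complex.abs z = ‖z‖ := rfl

lemma Complex.abs_conj (z : ℂ) : Complex.abs (starRingEnd ℂ z) = Complex.abs z := by
  rw [Complex.abs_apply, Complex.abs_apply]; simp

lemma Complex.abs_ofReal (x : ℝ) : Complex.abs (x : ℂ) = |x| := by
  rw [Complex.abs_apply]; simp

lemma hadamard_aux (m : ℕ) (A : Matrix (Fin (m+1)) (Fin (m+1)) ℂ) (c : ℝ) (hc : 0 ≤ c)
    (h : ∀ i j, Complex.abs (A i j) ≤ c) :
    Complex.abs A.det ≤ (Real.sqrt (m+1) * c) ^ (m+1) := by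
  classical
  haveI : WellFoundedLT (Fin (m+1)) := inferInstance
  let v : Fin (m+1) → EuclideanSpace ℂ (Fin (m+1)) := fun j => WithLp.toLp 2 (fun i => A i j)
  let u : Fin (m+1) → EuclideanSpace ℂ (Fin (m+1)) := InnerProductSpace.gramSchmidt ℂ v
  have hv : ∀ j, v j = u j + ∑ i ∈ Iio j, (⟪u i, v j⟫ / (‖u i‖ : ℂ) ^ 2) • u i :=
    fun j => InnerProductSpace.gramSchmidt_def'' ℂ v j
  have horth : ∀ i j, i ≠ j → ⟪u i, u j⟫ = 0 := fun i j hij => InnerProductSpace.gramSchmidt_orthogonal ℂ v hij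
  let T : Matrix (Fin (m+1)) (Fin (m+1)) ℂ := Matrix.of fun i j =>
    if i < j then (⟪u i, v j⟫ / (‖u i‖ : ℂ) ^ 2) else if i = j then 1 else 0
  let N : Matrix (Fin (m+1)) (Fin (m+1)) ℂ := Matrix.of fun i j => u j i
  have hA : A = N * T := by
    ext i j
    have key := congrArg (fun w : EuclideanSpace ℂ (Fin (m+1)) => w i) (hv j)
    simp only [PiLp.add_apply, PiLp.smul_apply, smul_eq_mul] at key
    rw [WithLp.ofLp_sum, Finset.sum_apply] at key
    have hAij : A i j = u j i + ∑ k ∈ Iio j, (⟪u k, v j⟫ / (‖u k‖ : ℂ) ^ 2) * u k i := key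
    rw [Matrix.mul_apply, hAij]
    have hsub : ∑ k, N i k * T k j = ∑ k ∈ insert j (Iio j), N i k * T k j := by
      refine (Finset.sum_subset (Finset.subset_univ _) ?_).symm
      intro k _ hk
      simp only [Finset.mem_insert, Finset.mem_Iio] at hk
      push_neg at hk
      have h1 : ¬ (k < j) := not_lt.mpr hk.2
      have h2 : k ≠ j := hk.1
      simp [T, Matrix.of_apply, h1, h2]
    rw [hsub, Finset.sum_insert (by simp)]
    simp only [N, T, Matrix.of_apply, lt_irrefl, if_false, if_pos rfl, mul_one, if_true]
    have : ∑ k ∈ Iio j, (⟪u k, v j⟫ / (‖u k‖ : ℂ) ^ 2) * u k i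
        = ∑ k ∈ Iio j, u k i * (if k < j then ⟪u k, v j⟫ / (‖u k‖ : ℂ) ^ 2 else if k = j then 1 else 0) := by
      refine Finset.sum_congr rfl fun k hk => ?_
      rw [Finset.mem_Iio] at hk
      rw [if_pos hk, mul_comm]
    rw [this]
  -- T is upper triangular with unit diagonal
  have hTdet : T.det = 1 := by
    have htri : T.BlockTriangular id := by
      intro i j hij
      have h1 : ¬ ((i : Fin (m+1)) < j) := not_lt.mpr (le_of_lt hij)
      have h2 : (i : Fin (m+1)) ≠ j := ne_of_gt hij
      simp [T, Matrix.of_apply, h1, h2]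
    rw [Matrix.det_of_upperTriangular htri]
    refine Finset.prod_eq_one fun i _ => by simp [T, Matrix.of_apply]
  -- |det N| = ∏ ‖u i‖
  have hNN : N.conjTranspose * N = Matrix.diagonal (fun i => ((‖u i‖ : ℂ)) ^ 2) := by
    ext i j
    rw [Matrix.mul_apply]
    have : ∑ k, (N.conjTranspose) i k * N k j = ⟪u i, u j⟫ := by
      rw [PiLp.inner_apply]
      refine Finset.sum_congr rfl fun k _ => ?_
      simp [N, Matrix.conjTranspose_apply, RCLike.inner_apply, mul_comm]
    rw [this]
    by_cases hij : i = j
    · subst hij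
      rw [inner_self_eq_norm_sq_to_K]
      simp
    · rw [horth i j hij, Matrix.diagonal_apply_ne _ hij]
  have habsN : Complex.abs N.det = ∏ i, ‖u i‖ := by
    have h1 : N.conjTranspose.det * N.det = ∏ i, ((‖u i‖ : ℂ)) ^ 2 := by
      rw [← Matrix.det_mul, hNN, Matrix.det_diagonal]
    have h1' : Complex.abs (N.conjTranspose.det) = Complex.abs N.det := by
      rw [Matrix.det_conjTranspose]
      exact Complex.abs_conj _
    have h2 : (Complex.abs N.det) ^ 2 = (∏ i, ‖u i‖) ^ 2 := by
      have := congrArg Complex.abs h1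
      rw [map_mul, h1', map_prod] at this
      rw [sq, this, ← Finset.prod_pow]
      exact Finset.prod_congr rfl fun i _ => by rw [map_pow, Complex.abs_ofReal, abs_norm]
    have h3 : (0:ℝ) ≤ ∏ i, ‖u i‖ := Finset.prod_nonneg fun i _ => norm_nonneg _
    have h4 : (0:ℝ) ≤ Complex.abs N.det := AbsoluteValue.nonneg _ _
    nlinarith [h2, h3, h4]
  -- ‖u i‖ ≤ ‖v i‖
  have hle : ∀ i, ‖u i‖ ≤ ‖v i‖ := by
    intro i
    have hperp : ⟪u i, v i - u i⟫ = 0 := by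
      have : v i - u i = ∑ k ∈ Iio i, (⟪u k, v i⟫ / (‖u k‖ : ℂ) ^ 2) • u k := by
        conv_lhs => rw [hv i]
        exact add_sub_cancel_left (u i) _
      rw [this, inner_sum]
      refine Finset.sum_eq_zero fun k hk => ?_
      rw [Finset.mem_Iio] at hk
      rw [inner_smul_right, horth i k (ne_of_gt hk), mul_zero]
    have hpyth : ‖v i‖ ^ 2 = ‖u i‖ ^ 2 + ‖v i - u i‖ ^ 2 := by
      have := norm_add_sq_eq_norm_sq_add_norm_sq_of_inner_eq_zero (u i) (v i - u i) hperp
      rw [add_sub_cancel] at this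
      simpa [pow_two] using this
    nlinarith [norm_nonneg (u i), norm_nonneg (v i), sq_nonneg ‖v i - u i‖]
  -- ‖v j‖ ≤ sqrt n * c
  have hvle : ∀ j, ‖v j‖ ≤ Real.sqrt (m+1) * c := by
    intro j
    rw [EuclideanSpace.norm_eq]
    have hsum : ∑ i, ‖v j i‖ ^ 2 ≤ ((m+1 : ℕ) : ℝ) * c ^ 2 := by
      calc ∑ i, ‖v j i‖ ^ 2 ≤ ∑ _i : Fin (m+1), c ^ 2 := by
            refine Finset.sum_le_sum fun i _ => ?_
            have : ‖v j i‖ = Complex.abs (A i j) := rfl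
            rw [this]
            exact pow_le_pow_left₀ (AbsoluteValue.nonneg _ _) (h i j) 2
        _ = ((m+1 : ℕ) : ℝ) * c ^ 2 := by simp [mul_comm]
    calc Real.sqrt (∑ i, ‖v j i‖ ^ 2) ≤ Real.sqrt (((m+1 : ℕ) : ℝ) * c ^ 2) := Real.sqrt_le_sqrt hsum
      _ = Real.sqrt (m+1) * c := by
          rw [Real.sqrt_mul (Nat.cast_nonneg (m+1)), Real.sqrt_sq hc]
          norm_num
  -- combine
  have hdet : Complex.abs A.det = ∏ i, ‖u i‖ := by
    rw [hA, Matrix.det_mul, hTdet, mul_one, habsN]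
  rw [hdet]
  have hprodc : (Real.sqrt (m+1) * c) ^ (m+1) = ∏ _i : Fin (m+1), (Real.sqrt (m+1) * c) := by
    simp
  rw [hprodc]
  refine Finset.prod_le_prod (fun i _ => norm_nonneg _) fun i _ => ?_
  calc ‖u i‖ ≤ ‖v i‖ := hle i
    _ ≤ Real.sqrt (m+1) * c := hvle i
  

lemma hadamard (n : ℕ) (A : Matrix (Fin n) (Fin n) ℂ) (c : ℝ) (hc : 0 ≤ c)
    (h : ∀ i j, Complex.abs (A i j) ≤ c) :
    Complex.abs A.det ≤ (Real.sqrt n * c) ^ n := by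
  cases n with
  | zero => simp [Matrix.det_fin_zero]
  | succ m =>
    have := hadamard_aux m A c hc h
    rwa [show ((m : ℝ) + 1) = ((m + 1 : ℕ) : ℝ) by push_cast; ring] at this
lemma vand_eq_det_vandermonde {n : ℕ} (x : Fin n → ℂ) :
    Vand x = (Matrix.vandermonde x).det := by
  rw [Matrix.det_vandermonde, Vand]
  refine (Finset.prod_comm' ?_).symm
  intro i j
  simp [Finset.mem_Ioi, Finset.mem_Iio]

lemma erase_eq_Iio_union_Ioi {n : ℕ} (i : Fin n) :
    (Finset.univ : Finset (Fin n)).erase i = Finset.Iio i ∪ Finset.Ioi i := by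
  ext k
  rw [Finset.mem_erase, Finset.mem_union, Finset.mem_Iio, Finset.mem_Ioi]
  constructor
  · rintro ⟨hne, -⟩; exact lt_or_gt_of_ne hne
  · rintro (h | h)
    · exact ⟨ne_of_lt h, Finset.mem_univ k⟩
    · exact ⟨ne_of_gt h, Finset.mem_univ k⟩

lemma prod_erase_pairs {n : ℕ} (r : Fin n → Fin n → ℝ) :
    (∏ i, ∏ k ∈ (Finset.univ : Finset (Fin n)).erase i, r i k)
      = (∏ j, ∏ i ∈ Finset.Iio j, r j i) * (∏ j, ∏ i ∈ Finset.Iio j, r i j) := by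
  have h1 : ∀ i : Fin n, ∏ k ∈ (Finset.univ : Finset (Fin n)).erase i, r i k
      = (∏ k ∈ Finset.Iio i, r i k) * ∏ k ∈ Finset.Ioi i, r i k := by
    intro i
    rw [erase_eq_Iio_union_Ioi, Finset.prod_union]
    simp [Finset.disjoint_left, Finset.mem_Iio, Finset.mem_Ioi]
    intro a ha; exact le_of_lt ha
  calc (∏ i, ∏ k ∈ (Finset.univ : Finset (Fin n)).erase i, r i k)
      = (∏ i, (∏ k ∈ Finset.Iio i, r i k)) * ∏ i, ∏ k ∈ Finset.Ioi i, r i k := by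
        rw [← Finset.prod_mul_distrib]; exact Finset.prod_congr rfl fun i _ => h1 i
    _ = (∏ j, ∏ i ∈ Finset.Iio j, r j i) * (∏ j, ∏ i ∈ Finset.Iio j, r i j) := by
        congr 1
        refine Finset.prod_comm' ?_
        intro i j
        simp [Finset.mem_Ioi, Finset.mem_Iio]

lemma abs_map_prod {ι : Type*} (s : Finset ι) (f : ι → ℂ) :
    Complex.abs (∏ i ∈ s, f i) = ∏ i ∈ s, Complex.abs (f i) := map_prod Complex.abs f s

lemma abs_vand {n : ℕ} (x : Fin n → ℂ) :
    Complex.abs (Vand x) = ∏ j, ∏ i ∈ Finset.Iio j, Complex.abs (x j - x i) := by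
  rw [Vand, abs_map_prod]
  exact Finset.prod_congr rfl fun j _ => abs_map_prod _ _

lemma abs_vandP {n m : ℕ} (x : Fin n → ℂ) (y : Fin m → ℂ) :
    Complex.abs (VandP x y) = ∏ i, ∏ j, Complex.abs (x i - y j) := by
  rw [VandP, abs_map_prod]
  exact Finset.prod_congr rfl fun j _ => abs_map_prod _ _

lemma abs_cauchy_identity {n : ℕ} (x y : Fin n → ℂ)
    (hxy : ∀ i j, x i ≠ y j) (hy : Function.Injective y) :
    Complex.abs (Matrix.det (Matrix.of fun i j => (x i - y j)⁻¹)) * Complex.abs (VandP x y)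
      = Complex.abs (Vand x) * Complex.abs (Vand y) := by
  classical
  rcases Nat.eq_zero_or_pos n with hn | hn
  · subst hn
    simp [Vand, VandP, Matrix.det_fin_zero]
  set q : Fin n → Polynomial ℂ :=
    fun j => ∏ k ∈ (Finset.univ : Finset (Fin n)).erase j, (Polynomial.X - Polynomial.C (y k)) with hq
  have hdeg : ∀ j, (q j).natDegree < n := by
    intro j
    have h1 : (q j).natDegree ≤ ∑ k ∈ (Finset.univ : Finset (Fin n)).erase j,
        (Polynomial.X - Polynomial.C (y k)).natDegree := Polynomial.natDegree_prod_le _ _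
    have h2 : ∑ k ∈ (Finset.univ : Finset (Fin n)).erase j,
        (Polynomial.X - Polynomial.C (y k)).natDegree = n - 1 := by
      rw [Finset.sum_congr rfl fun k _ => Polynomial.natDegree_X_sub_C (y k)]
      simp [Finset.card_erase_of_mem]
    omega
  have heval : ∀ (j : Fin n) (t : ℂ),
      (q j).eval t = ∏ k ∈ (Finset.univ : Finset (Fin n)).erase j, (t - y k) := by
    intro j t
    simp [hq, Polynomial.eval_prod]
  set Cy : Matrix (Fin n) (Fin n) ℂ := Matrix.of fun m j => (q j).coeff m with hCy
  have hentry : ∀ (z : Fin n → ℂ) (i j : Fin n),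
      (Matrix.vandermonde z * Cy) i j = ∏ k ∈ (Finset.univ : Finset (Fin n)).erase j, (z i - y k) := by
    intro z i j
    rw [Matrix.mul_apply, ← heval j (z i), Polynomial.eval_eq_sum_range' (hdeg j)]
    rw [← Fin.sum_univ_eq_sum_range (fun k => (q j).coeff k * z i ^ k) n]
    exact Finset.sum_congr rfl fun k _ => by rw [Matrix.vandermonde, hCy]; simp [mul_comm]
  have hsubne : ∀ i j, x i - y j ≠ 0 := fun i j => sub_ne_zero.mpr (hxy i j)
  have hC : (Matrix.of fun i j => (x i - y j)⁻¹)
      = Matrix.diagonal (fun i => (∏ k, (x i - y k))⁻¹) * (Matrix.vandermonde x * Cy) := by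
    ext i j
    rw [← Matrix.mul_assoc, Matrix.mul_assoc, Matrix.diagonal_mul, hentry x i j]
    have hsplit : ∏ k, (x i - y k)
        = (x i - y j) * ∏ k ∈ (Finset.univ : Finset (Fin n)).erase j, (x i - y k) :=
      (Finset.mul_prod_erase _ _ (Finset.mem_univ j)).symm
    have hpne : (∏ k ∈ (Finset.univ : Finset (Fin n)).erase j, (x i - y k)) ≠ 0 :=
      Finset.prod_ne_zero_iff.mpr fun k _ => hsubne i k
    rw [Matrix.of_apply, hsplit, mul_inv, mul_assoc, inv_mul_cancel₀ hpne, mul_one]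
  have hVyCy : Matrix.vandermonde y * Cy
      = Matrix.diagonal (fun i => ∏ k ∈ (Finset.univ : Finset (Fin n)).erase i, (y i - y k)) := by
    ext i j
    rw [hentry y i j]
    by_cases hij : i = j
    · subst hij; rw [Matrix.diagonal_apply_eq]
    · rw [Matrix.diagonal_apply_ne _ hij]
      exact Finset.prod_eq_zero (Finset.mem_erase.mpr ⟨hij, Finset.mem_univ i⟩) (sub_self (y i))
  -- determinants
  have hVy_ne : Complex.abs (Vand y) ≠ 0 := by
    rw [abs_vand]
    refine ne_of_gt (Finset.prod_pos fun j _ => Finset.prod_pos fun i hi => ?_)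
    rw [Finset.mem_Iio] at hi
    exact AbsoluteValue.pos _ (sub_ne_zero.mpr (fun hh => (ne_of_lt hi) (hy hh.symm)))
  have hdCy : Complex.abs (Vand y) * Complex.abs Cy.det
      = Complex.abs (Vand y) * Complex.abs (Vand y) := by
    have h1 : (Matrix.vandermonde y).det * Cy.det
        = ∏ i, ∏ k ∈ (Finset.univ : Finset (Fin n)).erase i, (y i - y k) := by
      rw [← Matrix.det_mul, hVyCy, Matrix.det_diagonal]
    have h2 := congrArg Complex.abs h1
    rw [map_mul, ← vand_eq_det_vandermonde, abs_map_prod] at h2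
    rw [h2]
    have h3 : ∀ i, Complex.abs (∏ k ∈ (Finset.univ : Finset (Fin n)).erase i, (y i - y k))
        = ∏ k ∈ (Finset.univ : Finset (Fin n)).erase i, Complex.abs (y i - y k) :=
      fun i => abs_map_prod _ _
    rw [Finset.prod_congr rfl fun i _ => h3 i,
      prod_erase_pairs (fun i k => Complex.abs (y i - y k)), abs_vand]
    congr 1
    refine Finset.prod_congr rfl fun j _ => Finset.prod_congr rfl fun i _ => ?_
    exact (AbsoluteValue.map_sub Complex.abs _ _)
  have hdCy' : Complex.abs Cy.det = Complex.abs (Vand y) := by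
    exact mul_left_cancel₀ hVy_ne hdCy
  have hPne : Complex.abs (VandP x y) ≠ 0 := by
    rw [abs_vandP]
    refine ne_of_gt (Finset.prod_pos fun i _ => Finset.prod_pos fun j _ => ?_)
    exact AbsoluteValue.pos _ (hsubne i j)
  have hdet := congrArg Complex.abs (congrArg Matrix.det hC)
  rw [Matrix.det_mul, Matrix.det_mul, Matrix.det_diagonal, map_mul, map_mul,
    ← vand_eq_det_vandermonde, hdCy', abs_map_prod] at hdet
  have hdiag : ∏ i, Complex.abs (∏ k, (x i - y k))⁻¹ = (Complex.abs (VandP x y))⁻¹ := by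
    rw [abs_vandP, ← Finset.prod_inv_distrib]
    exact Finset.prod_congr rfl fun i _ => by rw [map_inv₀, abs_map_prod]
  rw [hdet, hdiag]
  field_simp

lemma prod_Iio_fin {K : ℕ} (f : ℕ → ℝ) (j : Fin K) :
    ∏ i ∈ Finset.Iio j, f (i : ℕ) = ∏ i ∈ Finset.range (j : ℕ), f i := by
  rw [← Nat.Iio_eq_range, ← Fin.map_valEmbedding_Iio, Finset.prod_map]
  rfl

lemma abs_vand_natprod {K : ℕ} (W : Fin K → ℂ) (W' : ℕ → ℂ)
    (hW : ∀ i : Fin K, W' (i : ℕ) = W i) :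
    Complex.abs (Vand W)
      = ∏ j ∈ Finset.range K, ∏ i ∈ Finset.range j, Complex.abs (W' j - W' i) := by
  rw [abs_vand]
  rw [← Fin.prod_univ_eq_prod_range (fun j => ∏ i ∈ Finset.range j, Complex.abs (W' j - W' i)) K]
  refine Finset.prod_congr rfl fun j _ => ?_
  rw [← prod_Iio_fin (fun i => Complex.abs (W' (j : ℕ) - W' i)) j]
  exact Finset.prod_congr rfl fun i _ => by rw [hW j, hW i]

lemma abs_vandP_natprod {m n : ℕ} (x : Fin m → ℂ) (y : Fin n → ℂ) (x' y' : ℕ → ℂ)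
    (hx : ∀ i : Fin m, x' (i : ℕ) = x i) (hy : ∀ j : Fin n, y' (j : ℕ) = y j) :
    Complex.abs (VandP x y)
      = ∏ i ∈ Finset.range m, ∏ j ∈ Finset.range n, Complex.abs (x' i - y' j) := by
  rw [abs_vandP]
  rw [← Fin.prod_univ_eq_prod_range (fun i => ∏ j ∈ Finset.range n, Complex.abs (x' i - y' j)) m]
  refine Finset.prod_congr rfl fun i _ => ?_
  rw [← Fin.prod_univ_eq_prod_range (fun j => Complex.abs (x' (i : ℕ) - y' j)) n]
  exact Finset.prod_congr rfl fun j _ => by rw [hx i, hy j]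

lemma abs_vandP_comm {m n : ℕ} (x : Fin m → ℂ) (y : Fin n → ℂ) :
    Complex.abs (VandP x y) = Complex.abs (VandP y x) := by
  rw [abs_vandP, abs_vandP, Finset.prod_comm]
  exact Finset.prod_congr rfl fun j _ => Finset.prod_congr rfl fun i _ =>
    AbsoluteValue.map_sub Complex.abs _ _

lemma abs_vand_append {m n : ℕ} (a : Fin m → ℂ) (b : Fin n → ℂ) :
    Complex.abs (Vand (Fin.append a b))
      = Complex.abs (Vand a) * Complex.abs (Vand b) * Complex.abs (VandP a b) := by
  classical
  set W' : ℕ → ℂ :=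
    fun i => if h : i < m then a ⟨i, h⟩ else if h' : i - m < n then b ⟨i - m, h'⟩ else 0 with hW'
  have ha : ∀ (i : ℕ) (h : i < m), W' i = a ⟨i, h⟩ := fun i h => by simp [hW', h]
  have hb : ∀ (i : ℕ) (h : i < n), W' (m + i) = b ⟨i, h⟩ := by
    intro i h
    have h1 : ¬ (m + i < m) := by omega
    have h2 : m + i - m = i := by omega
    simp [hW', h1, h2, h]
  have ha' : ∀ i : Fin m, W' (i : ℕ) = a i := fun i => by rw [ha _ i.isLt]
  have hb' : ∀ i : Fin n, W' (m + (i : ℕ)) = b i := fun i => by rw [hb _ i.isLt]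
  have happ : ∀ i : Fin (m + n), W' (i : ℕ) = Fin.append a b i := by
    intro i
    rcases lt_or_ge (i : ℕ) m with h | h
    · have hi : i = Fin.castAdd n ⟨(i : ℕ), h⟩ := Fin.ext rfl
      have e := (congrArg (Fin.append a b) hi).trans (Fin.append_left a b ⟨(i : ℕ), h⟩)
      rw [e, ha _ h]
    · have hi' : (i : ℕ) - m < n := by omega
      have hi : i = Fin.natAdd m ⟨(i : ℕ) - m, hi'⟩ := Fin.ext (by simp; omega)
      have e := (congrArg (Fin.append a b) hi).trans (Fin.append_right a b ⟨(i : ℕ) - m, hi'⟩)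
      have e2 : (i : ℕ) = m + ((i : ℕ) - m) := by omega
      have hthis := hb ((i : ℕ) - m) hi'
      rw [← e2] at hthis
      rw [e, hthis]
  rw [abs_vand_natprod (Fin.append a b) W' happ]
  rw [Finset.prod_range_add (fun j => ∏ i ∈ Finset.range j, Complex.abs (W' j - W' i)) m n]
  have hsecond : ∀ j ∈ Finset.range n,
      (∏ i ∈ Finset.range (m + j), Complex.abs (W' (m + j) - W' i))
        = (∏ i ∈ Finset.range m, Complex.abs (W' (m + j) - W' i))
          * ∏ i ∈ Finset.range j, Complex.abs (W' (m + j) - W' (m + i)) := by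
    intro j _
    exact Finset.prod_range_add (fun i => Complex.abs (W' (m + j) - W' i)) m j
  rw [Finset.prod_congr rfl hsecond, Finset.prod_mul_distrib]
  have hP1 : (∏ j ∈ Finset.range m, ∏ i ∈ Finset.range j, Complex.abs (W' j - W' i))
      = Complex.abs (Vand a) := (abs_vand_natprod a W' ha').symm
  have hP3 : (∏ j ∈ Finset.range n, ∏ i ∈ Finset.range j,
        Complex.abs (W' (m + j) - W' (m + i)))
      = Complex.abs (Vand b) := (abs_vand_natprod b (fun i => W' (m + i)) hb').symm
  have hP2 : (∏ j ∈ Finset.range n, ∏ i ∈ Finset.range m, Complex.abs (W' (m + j) - W' i))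
      = Complex.abs (VandP a b) := by
    rw [abs_vandP_natprod a b W' (fun i => W' (m + i)) ha' hb', Finset.prod_comm]
    exact Finset.prod_congr rfl fun j _ => Finset.prod_congr rfl fun i _ =>
      AbsoluteValue.map_sub Complex.abs _ _
  rw [hP1, hP3, hP2]
  ring

lemma abs_vandP_append {m n m' n' : ℕ} (a : Fin m → ℂ) (b : Fin n → ℂ)
    (c : Fin m' → ℂ) (d : Fin n' → ℂ) :
    Complex.abs (VandP (Fin.append a b) (Fin.append c d))
      = Complex.abs (VandP a c) * Complex.abs (VandP a d)
        * Complex.abs (VandP b c) * Complex.abs (VandP b d) := by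
  rw [abs_vandP]
  rw [Fin.prod_univ_add (f := fun i => ∏ j, Complex.abs (Fin.append a b i - Fin.append c d j))]
  have inner : ∀ z : ℂ, (∏ j, Complex.abs (z - Fin.append c d j))
      = (∏ j, Complex.abs (z - c j)) * ∏ j, Complex.abs (z - d j) := by
    intro z
    rw [Fin.prod_univ_add (f := fun j => Complex.abs (z - Fin.append c d j))]
    congr 1
    · exact Finset.prod_congr rfl fun j _ => by rw [Fin.append_left]
    · exact Finset.prod_congr rfl fun j _ => by rw [Fin.append_right]
  rw [abs_vandP, abs_vandP, abs_vandP, abs_vandP]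
  rw [Finset.prod_congr rfl fun i (_ : i ∈ Finset.univ) => inner (Fin.append a b (Fin.castAdd n i)),
    Finset.prod_congr rfl fun i (_ : i ∈ Finset.univ) => inner (Fin.append a b (Fin.natAdd m i))]
  rw [Finset.prod_mul_distrib, Finset.prod_mul_distrib]
  have e1 : ∀ i : Fin m, Fin.append a b (Fin.castAdd n i) = a i := fun i => Fin.append_left a b i
  have e2 : ∀ i : Fin n, Fin.append a b (Fin.natAdd m i) = b i := fun i => Fin.append_right a b i
  simp only [e1, e2]
  ring

lemma vandP_abs_pos {m n : ℕ} (x : Fin m → ℂ) (y : Fin n → ℂ) (δ : ℝ) (hδ : 0 < δ)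
    (h : ∀ i j, δ ≤ Complex.abs (x i - y j)) : 0 < Complex.abs (VandP x y) := by
  rw [abs_vandP]
  exact Finset.prod_pos fun i _ => Finset.prod_pos fun j _ => lt_of_lt_of_le hδ (h i j)

lemma cauchy_bound {n : ℕ} (x y : Fin n → ℂ) (δ : ℝ) (hδ : 0 < δ)
    (h : ∀ i j, δ ≤ Complex.abs (x i - y j)) :
    Complex.abs (Vand x) * Complex.abs (Vand y)
      ≤ (Real.sqrt n * δ⁻¹) ^ n * Complex.abs (VandP x y) := by
  by_cases hy : Function.Injective y
  · have hxy : ∀ i j, x i ≠ y j := by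
      intro i j he
      have hj := h i j
      rw [he, sub_self, map_zero] at hj
      linarith
    rw [← abs_cauchy_identity x y hxy hy]
    have hd : Complex.abs (Matrix.det (Matrix.of fun i j => (x i - y j)⁻¹))
        ≤ (Real.sqrt n * δ⁻¹) ^ n := by
      refine hadamard n _ δ⁻¹ (inv_nonneg.mpr hδ.le) fun i j => ?_
      rw [Matrix.of_apply, map_inv₀]
      exact inv_anti₀ hδ (h i j)
    exact mul_le_mul_of_nonneg_right hd (AbsoluteValue.nonneg _ _)
  · rw [Function.not_injective_iff] at hy
    obtain ⟨i, j, hij, hne⟩ := hy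
    have hvy : Vand y = 0 := by
      rcases lt_or_gt_of_ne hne with hlt | hlt
      · exact Finset.prod_eq_zero (Finset.mem_univ j)
          (Finset.prod_eq_zero (Finset.mem_Iio.mpr hlt) (by rw [hij]; exact sub_self _))
      · exact Finset.prod_eq_zero (Finset.mem_univ i)
          (Finset.prod_eq_zero (Finset.mem_Iio.mpr hlt) (by rw [hij]; exact sub_self _))
    rw [hvy, map_zero, mul_zero]
    positivity


set_option maxHeartbeats 1000000 in
/-- Hadamard-type bound for the block Cauchy determinant factor `B`. -/
theorem stmt14 (k1 k2 : ℕ) (hk1 : 0 < k1) (hk2 : 0 < k2)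
    (ξ1 η1 : Fin k1 → ℂ) (ξ2 η2 : Fin k2 → ℂ)
    (δ : ℝ) (hδ : 0 < δ)
    (h1 : ∀ i j, δ ≤ ‖ξ1 i - η1 j‖)
    (h2 : ∀ i j, δ ≤ ‖ξ2 i - η2 j‖)
    (h3 : ∀ i j, δ ≤ ‖ξ1 i - η2 j‖)
    (h4 : ∀ i j, δ ≤ ‖η1 i - ξ2 j‖)
    (h5 : ∀ i j, δ ≤ ‖ξ1 i - ξ2 j‖)
    (h6 : ∀ i j, δ ≤ ‖η1 i - η2 j‖) :
    ‖(
      (Vand ξ1) ^ 2 * (Vand η1) ^ 2 / (VandP ξ1 η1) ^ 2 *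
      ((Vand ξ2) ^ 2 * (Vand η2) ^ 2 / (VandP ξ2 η2) ^ 2) *
      (VandP ξ1 η2 * VandP η1 ξ2 / (VandP ξ1 ξ2 * VandP η1 η2)))‖
    ≤ (k1 : ℝ) ^ ((k1 : ℝ) / 2) * (k2 : ℝ) ^ ((k2 : ℝ) / 2) *
      ((k1 : ℝ) + (k2 : ℝ)) ^ (((k1 : ℝ) + (k2 : ℝ)) / 2) *
      δ ^ (-(2 * ((k1 : ℤ) + (k2 : ℤ)))) := by
  show Complex.abs _ ≤ _
  set X : Fin (k1 + k2) → ℂ := Fin.append ξ1 η2 with hX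
  set Y : Fin (k1 + k2) → ℂ := Fin.append η1 ξ2 with hY
  have hXY : ∀ i j, δ ≤ Complex.abs (X i - Y j) := by
    intro i j
    refine Fin.addCases (fun i' => ?_) (fun i' => ?_) i <;>
      refine Fin.addCases (fun j' => ?_) (fun j' => ?_) j
    · rw [hX, hY, Fin.append_left, Fin.append_left]; exact h1 i' j'
    · rw [hX, hY, Fin.append_left, Fin.append_right]; exact h5 i' j'
    · rw [hX, hY, Fin.append_right, Fin.append_left,
        AbsoluteValue.map_sub]
      exact h6 j' i'
    · rw [hX, hY, Fin.append_right, Fin.append_right,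
        AbsoluteValue.map_sub]
      exact h2 j' i'
  simp only [map_mul, map_div₀, map_pow]
  -- abbreviations
  set vξ1 := Complex.abs (Vand ξ1)
  set vη1 := Complex.abs (Vand η1)
  set vξ2 := Complex.abs (Vand ξ2)
  set vη2 := Complex.abs (Vand η2)
  set p11 := Complex.abs (VandP ξ1 η1)
  set p22 := Complex.abs (VandP ξ2 η2)
  set pa := Complex.abs (VandP ξ1 η2)
  set pb := Complex.abs (VandP η1 ξ2)
  set pc := Complex.abs (VandP ξ1 ξ2)
  set pd := Complex.abs (VandP η1 η2)
  have hp11 : 0 < p11 := vandP_abs_pos _ _ δ hδ h1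
  have hp22 : 0 < p22 := vandP_abs_pos _ _ δ hδ h2
  have hpa : 0 < pa := vandP_abs_pos _ _ δ hδ h3
  have hpb : 0 < pb := vandP_abs_pos _ _ δ hδ h4
  have hpc : 0 < pc := vandP_abs_pos _ _ δ hδ h5
  have hpd : 0 < pd := vandP_abs_pos _ _ δ hδ h6
  have hv1 : 0 ≤ vξ1 := AbsoluteValue.nonneg _ _
  have hv2 : 0 ≤ vη1 := AbsoluteValue.nonneg _ _
  have hv3 : 0 ≤ vξ2 := AbsoluteValue.nonneg _ _
  have hv4 : 0 ≤ vη2 := AbsoluteValue.nonneg _ _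
  set C1 : ℝ := (Real.sqrt k1 * δ⁻¹) ^ k1 with hC1
  set C2 : ℝ := (Real.sqrt k2 * δ⁻¹) ^ k2 with hC2
  set C3 : ℝ := (Real.sqrt (k1 + k2 : ℕ) * δ⁻¹) ^ (k1 + k2) with hC3
  have hC1n : 0 ≤ C1 := by positivity
  have hC2n : 0 ≤ C2 := by positivity
  have hC3n : 0 ≤ C3 := by positivity
  have B1 : vξ1 * vη1 ≤ C1 * p11 := cauchy_bound ξ1 η1 δ hδ h1
  have B2 : vξ2 * vη2 ≤ C2 * p22 := cauchy_bound ξ2 η2 δ hδ h2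
  have B3' := cauchy_bound X Y δ hδ hXY
  have hVX : Complex.abs (Vand X) = vξ1 * vη2 * pa := abs_vand_append ξ1 η2
  have hVY : Complex.abs (Vand Y) = vη1 * vξ2 * pb := abs_vand_append η1 ξ2
  have hPXY : Complex.abs (VandP X Y) = p11 * pc * pd * p22 := by
    rw [hX, hY, abs_vandP_append ξ1 η2 η1 ξ2]
    rw [show Complex.abs (VandP η2 η1) = pd from abs_vandP_comm η2 η1,
      show Complex.abs (VandP η2 ξ2) = p22 from abs_vandP_comm η2 ξ2]
    try ring
  rw [hVX, hVY, hPXY] at B3'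
  have B3 : vξ1 * vη2 * pa * (vη1 * vξ2 * pb) ≤ C3 * (p11 * pc * pd * p22) := B3'
  have hLHS : vξ1 ^ 2 * vη1 ^ 2 / p11 ^ 2 * (vξ2 ^ 2 * vη2 ^ 2 / p22 ^ 2) * (pa * pb / (pc * pd))
      = (vξ1 * vη1 / p11) * (vξ2 * vη2 / p22)
        * ((vξ1 * vη2 * pa * (vη1 * vξ2 * pb)) / (p11 * pc * pd * p22)) := by
    field_simp
  rw [hLHS]
  have F1 : vξ1 * vη1 / p11 ≤ C1 := (div_le_iff₀ hp11).mpr B1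
  have F2 : vξ2 * vη2 / p22 ≤ C2 := (div_le_iff₀ hp22).mpr B2
  have F3 : (vξ1 * vη2 * pa * (vη1 * vξ2 * pb)) / (p11 * pc * pd * p22) ≤ C3 :=
    (div_le_iff₀ (by positivity)).mpr B3
  have hle : (vξ1 * vη1 / p11) * (vξ2 * vη2 / p22)
      * ((vξ1 * vη2 * pa * (vη1 * vξ2 * pb)) / (p11 * pc * pd * p22)) ≤ C1 * C2 * C3 := by
    have n1 : 0 ≤ vξ1 * vη1 / p11 := by positivity
    have n2 : 0 ≤ vξ2 * vη2 / p22 := by positivity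
    have n3 : 0 ≤ (vξ1 * vη2 * pa * (vη1 * vξ2 * pb)) / (p11 * pc * pd * p22) := by positivity
    exact mul_le_mul (mul_le_mul F1 F2 n2 hC1n) F3 n3 (by positivity)
  refine le_trans hle (le_of_eq ?_)
  -- C1 * C2 * C3 = RHS
  have hs : ∀ k : ℕ, (Real.sqrt k) ^ k = (k : ℝ) ^ ((k : ℝ) / 2) := by
    intro k
    rw [Real.sqrt_eq_rpow, ← Real.rpow_natCast ((k : ℝ) ^ ((1:ℝ)/2)) k,
      ← Real.rpow_mul (Nat.cast_nonneg k)]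
    congr 1
    ring
  have hδpow : δ ^ (-(2 * ((k1 : ℤ) + (k2 : ℤ)))) = (δ⁻¹) ^ k1 * (δ⁻¹) ^ k2 * (δ⁻¹) ^ (k1 + k2) := by
    have : (-(2 * ((k1 : ℤ) + (k2 : ℤ)))) = -((2 * (k1 + k2) : ℕ) : ℤ) := by push_cast; ring
    rw [this, zpow_neg, zpow_natCast, ← inv_pow]
    rw [← pow_add, ← pow_add]
    congr 1
    ring
  rw [hC1, hC2, hC3, mul_pow, mul_pow, mul_pow, hs k1, hs k2, hs (k1 + k2), hδpow]
  push_cast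
  ring
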